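/- Let q be an odd prime power, f ∈ Fq[X], f ≠ X, a monic irreducible polynomial of degree n, and let C ∈ Fq[X] be the polynomial satisfying C(X²) = (−1)^n f(X)·f(−X). Then C is irreducible over Fq if and only if there does not exist a polynomial D ∈ Fq[X] such that f(X) = D(X²). -/
import Mathlib

open Polynomial IntermediateField

/-- Let `q` be an odd prime power, `f ∈ F_q[X]`, `f ≠ X`, monic irreducible
of degree `n`, and `C ∈ F_q[X]` the polynomial with `C(X²) = (−1)^n f(X) f(−X)`. Then `C` is
irreducible over `F_q` iff there is no `D ∈ F_q[X]` with `f(X) = D(X²)`. -/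
theorem stmt2 {F : Type*} [Field F] [Fintype F] (hq : Odd (Fintype.card F))
    (f : F[X]) (n : ℕ) (hmonic : f.Monic) (hirr : Irreducible f) (hfX : f ≠ X)
    (hdeg : f.natDegree = n)
    (C : F[X]) (hC : C.comp (X ^ 2) = (-1) ^ n * (f * f.comp (-X))) :
    Irreducible C ↔ ¬ ∃ D : F[X], f = D.comp (X ^ 2) := by
  classical
  have hfne : f ≠ 0 := hmonic.ne_zero
  have hn : 0 < n := by
    rcases Nat.eq_zero_or_pos n with h0 | h
    · exfalso
      apply hirr.not_isUnit
      rw [eq_one_of_monic_natDegree_zero hmonic (hdeg.trans h0)]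
      exact isUnit_one
    · exact h
  -- rewrite comps as expand
  have hC' : expand F 2 C = (-1) ^ n * (f * f.comp (-X)) := by
    rw [expand_eq_comp_X_pow]; exact hC
  have hfcne : f.comp (-X) ≠ 0 := by
    intro h
    have : (f.comp (-X)).comp (-X) = f := by
      rw [comp_assoc]
      simp
    rw [h, zero_comp] at this
    exact hfne this.symm
  have hfcdeg : (f.comp (-X)).natDegree = n := by
    rw [natDegree_comp]
    simp [hdeg]
  have hu : ((-1 : F[X]) ^ n) = Polynomial.C ((-1 : F) ^ n) := by
    simp
  have hune : ((-1 : F) ^ n) ≠ 0 := by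
    simp
  have hrhsdeg : ((-1 : F[X]) ^ n * (f * f.comp (-X))).natDegree = 2 * n := by
    rw [hu, natDegree_C_mul hune, natDegree_mul hfne hfcne, hdeg, hfcdeg]
    ring
  have hCdeg : C.natDegree = n := by
    have h1 : (expand F 2 C).natDegree = 2 * n := by rw [hC', hrhsdeg]
    rw [natDegree_expand] at h1
    omega
  have hCne : C ≠ 0 := by
    intro h
    rw [h, map_zero] at hC'
    have := hrhsdeg
    rw [← hC'] at this
    simp at this
    omega
  -- pick a root in the algebraic closure
  set K := AlgebraicClosure F
  obtain ⟨α, hα⟩ : ∃ α : K, aeval α f = 0 := by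
    apply IsAlgClosed.exists_aeval_eq_zero
    rw [degree_eq_natDegree hfne, hdeg]
    exact_mod_cast (by omega : n ≠ 0)
  have hint : IsIntegral F α := ⟨f, hmonic, by rwa [← aeval_def]⟩
  have hfmin : minpoly F α = f := (minpoly.eq_of_irreducible_of_monic hirr hα hmonic).symm
  have hint2 : IsIntegral F (α ^ 2) := hint.pow 2
  set m := minpoly F (α ^ 2) with hm
  have hmmonic : m.Monic := minpoly.monic hint2
  have hmirr : Irreducible m := minpoly.irreducible hint2
  set d := m.natDegree with hd
  -- m divides C
  have hCα : aeval (α ^ 2) C = 0 := by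
    have h1 : aeval α (expand F 2 C) = aeval (α ^ 2) C := expand_aeval 2 C α
    rw [hC'] at h1
    rw [← h1]
    simp [hα]
  have hmC : m ∣ C := minpoly.dvd F _ hCα
  have hdlen : d ≤ n := hCdeg ▸ natDegree_le_of_dvd hmC hCne
  -- f divides expand 2 m
  have hfm : f ∣ expand F 2 m := by
    rw [← hfmin]
    apply minpoly.dvd
    rw [expand_aeval]
    exact minpoly.aeval F (α ^ 2)
  have hexpne : expand F 2 m ≠ 0 := (hmmonic.expand two_pos).ne_zero
  have hnle : n ≤ 2 * d := by
    have := natDegree_le_of_dvd hfm hexpne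
    rw [natDegree_expand, hdeg] at this
    omega
  -- d divides n via the intermediate field F(α)
  have hdvd : d ∣ n := by
    have hfd : FiniteDimensional F F⟮α⟯ := IntermediateField.adjoin.finiteDimensional hint
    have hmemsq : α ^ 2 ∈ F⟮α⟯ := pow_mem (IntermediateField.mem_adjoin_simple_self F α) 2
    set x : F⟮α⟯ := ⟨α ^ 2, hmemsq⟩ with hx
    have hxmap : algebraMap F⟮α⟯ K x = α ^ 2 := rfl
    have hminx : minpoly F x = m := by
      rw [hm, ← hxmap, minpoly.algebraMap_eq (algebraMap F⟮α⟯ K).injective]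
    have hrank : Module.finrank F F⟮α⟯ = n := by
      rw [IntermediateField.adjoin.finrank hint, hfmin, hdeg]
    have := minpoly.degree_dvd (K := F) (x := x) (IsIntegral.of_finite F x)
    rwa [hminx, hrank] at this
  constructor
  · -- C irreducible → no D
    rintro hCirr ⟨D, hD⟩
    rw [← expand_eq_comp_X_pow] at hD
    have hDdeg : n = D.natDegree * 2 := by
      rw [← hdeg, hD, natDegree_expand]
    have hneven : Even n := ⟨D.natDegree, by omega⟩
    have hfcomp : f.comp (-X) = f := by
      rw [hD, expand_eq_comp_X_pow, comp_assoc]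
      congr 1
      simp [pow_comp]
    have hexp : expand F 2 C = expand F 2 (D * D) := by
      rw [hC', hfcomp, hD, map_mul, hneven.neg_one_pow, one_mul]
    have hCD : C = D * D := expand_injective two_pos hexp
    have : IsUnit D ∨ IsUnit D := hCirr.isUnit_or_isUnit hCD
    have hDunit : IsUnit D := this.elim id id
    have := natDegree_eq_zero_of_isUnit hDunit
    omega
  · -- no D → C irreducible
    intro hnoD
    rcases eq_or_lt_of_le hdlen with hdn | hdlt
    · -- d = n : C is associated to the irreducible m
      have hassoc : Associated m C := by
        apply associated_of_dvd_of_natDegree_le_of_leadingCoeff hmC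
        · rw [hCdeg, ← hd, hdn]
        · exact ((leadingCoeff_ne_zero.mpr hCne).isUnit).dvd
      exact hassoc.irreducible hmirr
    · -- d < n : then n = 2d and f = m(X²), contradiction
      exfalso
      have hn2d : n = 2 * d := by
        rcases hdvd with ⟨k, hk⟩
        have : 2 ≤ k := by nlinarith
        nlinarith
      have hfeq : f = expand F 2 m := by
        apply eq_of_dvd_of_natDegree_le_of_leadingCoeff hfm
        · rw [natDegree_expand, hdeg]; omega
        · rw [hmonic.leadingCoeff, (hmmonic.expand two_pos).leadingCoeff]
      exact hnoD ⟨m, by rw [hfeq, expand_eq_comp_X_pow]⟩
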